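/- If A and B are symmetric positive semidefinite n×n real matrices with B ⪯ A, then ‖(I + A)⁻¹ − (I + B)⁻¹‖₂ ≤ f(‖A − B‖₂), where f(x) = x/(1+x). -/

import Mathlib

open Matrix
open scoped Matrix.Norms.L2Operator

namespace ResolventAux

variable {n : ℕ}

section Conj

variable {V : Matrix (Fin n) (Fin n) ℝ}

lemma conj_psd (hd : V * Vᴴ = 1) (d : Fin n → ℝ) (h : ∀ i, 0 ≤ d i) :
    (V * diagonal d * Vᴴ).PosSemidef :=
  (Matrix.PosSemidef.diagonal h).mul_mul_conjTranspose_same V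

lemma conj_smul_one (hV : V * Vᴴ = 1) (c : ℝ) :
    c • (1 : Matrix (Fin n) (Fin n) ℝ) = V * diagonal (fun _ => c) * Vᴴ := by
  calc c • (1 : Matrix (Fin n) (Fin n) ℝ) = c • (V * Vᴴ) := by rw [hV]
    _ = V * (c • (1 : Matrix (Fin n) (Fin n) ℝ)) * Vᴴ := by
        rw [mul_smul_comm, smul_mul_assoc, Matrix.mul_one]
    _ = V * diagonal (fun _ => c) * Vᴴ := by rw [smul_one_eq_diagonal]

lemma conj_sub (d e : Fin n → ℝ) :
    V * diagonal d * Vᴴ - V * diagonal e * Vᴴ = V * diagonal (fun i => d i - e i) * Vᴴ := by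
  rw [← sub_mul, ← mul_sub, diagonal_sub]

lemma conj_add (d e : Fin n → ℝ) :
    V * diagonal d * Vᴴ + V * diagonal e * Vᴴ = V * diagonal (fun i => d i + e i) * Vᴴ := by
  rw [← add_mul, ← mul_add, diagonal_add]

lemma conj_inv (hV : V * Vᴴ = 1) (hV' : Vᴴ * V = 1) (d : Fin n → ℝ) (h : ∀ i, d i ≠ 0) :
    (V * diagonal d * Vᴴ)⁻¹ = V * diagonal (fun i => (d i)⁻¹) * Vᴴ := by
  apply Matrix.inv_eq_right_inv
  calc V * diagonal d * Vᴴ * (V * diagonal (fun i => (d i)⁻¹) * Vᴴ)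
      = V * diagonal d * (Vᴴ * V) * diagonal (fun i => (d i)⁻¹) * Vᴴ := by
        simp only [Matrix.mul_assoc]
    _ = V * (diagonal d * diagonal (fun i => (d i)⁻¹)) * Vᴴ := by
        rw [hV']; simp only [Matrix.mul_one, Matrix.mul_assoc]
    _ = 1 := by
        rw [diagonal_mul_diagonal]
        have : (fun i => d i * (d i)⁻¹) = fun _ : Fin n => (1:ℝ) := by
          funext i; exact mul_inv_cancel₀ (h i)
        rw [this, diagonal_one, Matrix.mul_one, hV]

end Conj

/-- spectral theorem, real version. -/
lemma spectral_real {C : Matrix (Fin n) (Fin n) ℝ} (hC : C.IsHermitian) :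
    C = (hC.eigenvectorUnitary : Matrix (Fin n) (Fin n) ℝ) * diagonal hC.eigenvalues *
      (hC.eigenvectorUnitary : Matrix (Fin n) (Fin n) ℝ)ᴴ := by
  have h := hC.spectral_theorem
  rwa [Unitary.conjStarAlgAut_apply,
    show (RCLike.ofReal ∘ hC.eigenvalues : Fin n → ℝ) = hC.eigenvalues by
    funext i; simp, star_eq_conjTranspose] at h

lemma smul_one_posSemidef {c : ℝ} (hc : 0 ≤ c) :
    (c • (1 : Matrix (Fin n) (Fin n) ℝ)).PosSemidef := by
  rw [smul_one_eq_diagonal]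
  exact .diagonal fun i => hc

lemma smul_one_posDef {c : ℝ} (hc : 0 < c) :
    (c • (1 : Matrix (Fin n) (Fin n) ℝ)).PosDef := by
  rw [smul_one_eq_diagonal, Matrix.posDef_diagonal_iff]
  exact fun i => hc

lemma eigenvalue_abs_le {C : Matrix (Fin n) (Fin n) ℝ} (hC : C.IsHermitian) (i : Fin n) :
    |hC.eigenvalues i| ≤ ‖C‖ := by
  have h := C.l2_opNorm_mulVec (hC.eigenvectorBasis i)
  have h2 : (EuclideanSpace.equiv (Fin n) ℝ).symm (C *ᵥ hC.eigenvectorBasis i)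
      = hC.eigenvalues i • hC.eigenvectorBasis i := by
    rw [hC.mulVec_eigenvectorBasis]
    rfl
  rw [h2] at h
  have hb : ‖hC.eigenvectorBasis i‖ = 1 := hC.eigenvectorBasis.orthonormal.1 i
  rw [hb, mul_one, norm_smul, hb, mul_one, Real.norm_eq_abs] at h
  exact h

lemma smul_norm_sub_posSemidef {C : Matrix (Fin n) (Fin n) ℝ} (hC : C.IsHermitian) :
    (‖C‖ • 1 - C).PosSemidef := by
  set V := (hC.eigenvectorUnitary : Matrix (Fin n) (Fin n) ℝ) with hVdef
  have hV : V * Vᴴ = 1 := by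
    rw [← star_eq_conjTranspose]
    exact mem_unitaryGroup_iff.mp hC.eigenvectorUnitary.2
  have h1 : ‖C‖ • (1 : Matrix (Fin n) (Fin n) ℝ) - C
      = V * diagonal (fun i => ‖C‖ - hC.eigenvalues i) * Vᴴ := by
    calc ‖C‖ • (1 : Matrix (Fin n) (Fin n) ℝ) - C
        = V * diagonal (fun _ => ‖C‖) * Vᴴ - V * diagonal hC.eigenvalues * Vᴴ := by
          rw [← conj_smul_one hV, ← spectral_real hC]
      _ = V * diagonal (fun i => ‖C‖ - hC.eigenvalues i) * Vᴴ := conj_sub _ _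
  rw [h1]
  exact conj_psd hV _ fun i => sub_nonneg.2 ((abs_le.mp (eigenvalue_abs_le hC i)).2)

lemma norm_symm_sq (v : Fin n → ℝ) :
    ‖(WithLp.equiv 2 (Fin n → ℝ)).symm v‖ ^ 2 = v ⬝ᵥ v := by
  rw [EuclideanSpace.norm_eq, Real.sq_sqrt (by positivity)]
  simp [dotProduct, Real.norm_eq_abs, sq_abs, pow_two]

open scoped MatrixOrder in
lemma norm_le_of_sandwich {M : Matrix (Fin n) (Fin n) ℝ} (hM : M.IsHermitian) {c : ℝ}
    (hc : 0 ≤ c) (h₁ : (c • 1 - M).PosSemidef) (h₂ : (c • 1 + M).PosSemidef) : ‖M‖ ≤ c := by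
  have hS : CFC.sqrt (c • 1 + M) * CFC.sqrt (c • 1 + M) = c • 1 + M :=
    CFC.sqrt_mul_sqrt_self _ h₂.nonneg
  set S := CFC.sqrt (c • 1 + M) with hSdef
  have hSH : Sᴴ = S := (CFC.sqrt_nonneg _).posSemidef.1
  have hMT : Mᵀ = M := by rw [← Matrix.conjTranspose_eq_transpose_of_trivial, hM]
  have hMeq : M = S * S - c • 1 := by rw [hS]; abel
  have hE : ((c * c) • (1 : Matrix (Fin n) (Fin n) ℝ) - M * M).PosSemidef := by
    have h3 := h₁.mul_mul_conjTranspose_same S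
    rw [hSH] at h3
    have h4 : S * (c • 1 - M) * Sᴴ = (c * c) • 1 - M * M := by
      rw [hSH, hMeq]
      simp only [Matrix.mul_sub, Matrix.sub_mul, smul_mul_assoc, mul_smul_comm, smul_sub,
        sub_smul, smul_smul, Matrix.mul_one, Matrix.one_mul, Matrix.mul_assoc]
      try abel
    rw [hSH] at h4
    rwa [h4] at h3
  rw [Matrix.l2_opNorm_def]
  refine ContinuousLinearMap.opNorm_le_bound _ hc fun x => ?_
  set x' : Fin n → ℝ := (WithLp.equiv 2 (Fin n → ℝ)) x with hx'def
  have key : (M *ᵥ x') ⬝ᵥ (M *ᵥ x') ≤ (c * c) * (x' ⬝ᵥ x') := by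
    have h5 := hE.dotProduct_mulVec_nonneg x'
    rw [star_trivial, Matrix.sub_mulVec, Matrix.smul_mulVec, Matrix.one_mulVec,
      dotProduct_sub, dotProduct_smul] at h5
    have h6 : x' ⬝ᵥ ((M * M) *ᵥ x') = (M *ᵥ x') ⬝ᵥ (M *ᵥ x') := by
      rw [← Matrix.mulVec_mulVec, Matrix.dotProduct_mulVec]
      congr 1
      rw [← Matrix.mulVec_transpose, hMT]
    rw [h6] at h5
    have := sub_nonneg.mp h5
    simpa [smul_eq_mul] using this
  have hTx : (Matrix.toEuclideanLin.trans LinearMap.toContinuousLinearMap) M x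
      = (WithLp.equiv 2 (Fin n → ℝ)).symm (M *ᵥ x') := rfl
  have hxx : ‖x‖ ^ 2 = x' ⬝ᵥ x' := by
    rw [← norm_symm_sq]
    congr 1
  have h7 : ‖(Matrix.toEuclideanLin.trans LinearMap.toContinuousLinearMap) M x‖ ^ 2
      ≤ (c * ‖x‖) ^ 2 := by
    rw [hTx, norm_symm_sq]
    calc (M *ᵥ x') ⬝ᵥ (M *ᵥ x') ≤ (c * c) * (x' ⬝ᵥ x') := key
      _ = (c * ‖x‖) ^ 2 := by rw [← hxx]; ring
  nlinarith [norm_nonneg ((Matrix.toEuclideanLin.trans LinearMap.toContinuousLinearMap) M x),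
    mul_nonneg hc (norm_nonneg x)]

lemma one_eq_conj {V : Matrix (Fin n) (Fin n) ℝ} (hV : V * Vᴴ = 1) :
    (1 : Matrix (Fin n) (Fin n) ℝ) = V * diagonal (fun _ => (1:ℝ)) * Vᴴ := by
  simpa using conj_smul_one hV 1

lemma inv_le_one_of_one_le {C : Matrix (Fin n) (Fin n) ℝ} (hC : C.IsHermitian)
    (h1 : (C - 1).PosSemidef) : (1 - C⁻¹).PosSemidef := by
  set V := (hC.eigenvectorUnitary : Matrix (Fin n) (Fin n) ℝ) with hVdef
  have hV : V * Vᴴ = 1 := by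
    rw [← star_eq_conjTranspose]; exact mem_unitaryGroup_iff.mp hC.eigenvectorUnitary.2
  have hV' : Vᴴ * V = 1 := by
    rw [← star_eq_conjTranspose]; exact mem_unitaryGroup_iff'.mp hC.eigenvectorUnitary.2
  have hdiageq : Vᴴ * C * V = diagonal hC.eigenvalues := by
    have h := hC.conjStarAlgAut_star_eigenvectorUnitary
    rw [Unitary.conjStarAlgAut_star_apply, star_eq_conjTranspose] at h
    rw [h]
    congr 1
  have hge : ∀ i, 1 ≤ hC.eigenvalues i := by
    intro i
    have hdiag : (Vᴴ * (C - 1) * V).PosSemidef := h1.conjTranspose_mul_mul_same V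
    have heq : Vᴴ * (C - 1) * V = diagonal (fun i => hC.eigenvalues i - 1) := by
      rw [Matrix.mul_sub, Matrix.sub_mul, Matrix.mul_one, hV', hdiageq, ← diagonal_one,
        diagonal_sub]
    rw [heq] at hdiag
    have := (posSemidef_diagonal_iff.mp hdiag) i
    linarith
  have hne : ∀ i, hC.eigenvalues i ≠ 0 := fun i => by have := hge i; positivity
  have hCinv : C⁻¹ = V * diagonal (fun i => (hC.eigenvalues i)⁻¹) * Vᴴ := by
    conv_lhs => rw [spectral_real hC]
    exact conj_inv hV hV' _ hne
  have hrepr : 1 - C⁻¹ = V * diagonal (fun i => 1 - (hC.eigenvalues i)⁻¹) * Vᴴ := by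
    rw [hCinv]
    nth_rewrite 1 [one_eq_conj hV]
    rw [conj_sub]
  rw [hrepr]
  refine conj_psd hV _ fun i => ?_
  have h0 : 0 < hC.eigenvalues i := lt_of_lt_of_le one_pos (hge i)
  have : (hC.eigenvalues i)⁻¹ ≤ 1 := by
    rw [inv_le_one_iff₀]
    right; exact hge i
  linarith

open scoped MatrixOrder in
lemma inv_sub_inv_posSemidef {P Q : Matrix (Fin n) (Fin n) ℝ} (hP : P.PosDef) (hQ : Q.PosDef)
    (h : (Q - P).PosSemidef) : (P⁻¹ - Q⁻¹).PosSemidef := by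
  set R := CFC.sqrt P with hRdef
  have hRR : R * R = P := CFC.sqrt_mul_sqrt_self P hP.posSemidef.nonneg
  have hRH : Rᴴ = R := (CFC.sqrt_nonneg P).posSemidef.1
  have hdet : IsUnit R.det := by
    have hd : R.det * R.det = P.det := by rw [← det_mul, hRR]
    have hPd := hP.det_pos
    refine isUnit_iff_ne_zero.2 fun h0 => ?_
    rw [h0, mul_zero] at hd
    exact hPd.ne hd
  have hRi : R⁻¹ * R = 1 := Matrix.nonsing_inv_mul R hdet
  have hiR : R * R⁻¹ = 1 := Matrix.mul_nonsing_inv R hdet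
  have hRiH : (R⁻¹)ᴴ = R⁻¹ := (CFC.sqrt_nonneg P).posSemidef.1.inv
  set C := R⁻¹ * Q * R⁻¹ with hCdef
  have hCH : C.IsHermitian := by
    have h2 := Matrix.isHermitian_conjTranspose_mul_mul R⁻¹ hQ.isHermitian
    rwa [hRiH] at h2
  have hP1 : R⁻¹ * P * R⁻¹ = 1 := by
    calc R⁻¹ * P * R⁻¹ = R⁻¹ * (R * (R * R⁻¹)) := by
          rw [← hRR]; simp only [Matrix.mul_assoc]
      _ = R⁻¹ * R := by rw [hiR, Matrix.mul_one]
      _ = 1 := hRi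
  have h1 : (C - 1).PosSemidef := by
    have h2 := h.mul_mul_conjTranspose_same R⁻¹
    rw [hRiH] at h2
    have heq : R⁻¹ * (Q - P) * R⁻¹ = C - 1 := by
      rw [Matrix.mul_sub, Matrix.sub_mul, hP1]
    rwa [heq] at h2
  have hsub := inv_le_one_of_one_le hCH h1
  have hQdet : IsUnit Q.det := hQ.isUnit.map (MonoidHom.id _) |>.map detMonoidHom
  have hQQ : Q * Q⁻¹ = 1 := Matrix.mul_nonsing_inv Q (Matrix.isUnit_iff_isUnit_det Q |>.mp hQ.isUnit)
  have hCinv : C⁻¹ = R * Q⁻¹ * R := by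
    apply Matrix.inv_eq_right_inv
    calc R⁻¹ * Q * R⁻¹ * (R * Q⁻¹ * R)
        = R⁻¹ * (Q * ((R⁻¹ * R) * (Q⁻¹ * R))) := by simp only [Matrix.mul_assoc]
      _ = R⁻¹ * (Q * Q⁻¹ * R) := by rw [hRi, Matrix.one_mul, Matrix.mul_assoc]
      _ = R⁻¹ * R := by rw [hQQ, Matrix.one_mul]
      _ = 1 := hRi
  have hfin : P⁻¹ - Q⁻¹ = R⁻¹ * (1 - C⁻¹) * R⁻¹ := by
    rw [hCinv, Matrix.mul_sub, Matrix.sub_mul, Matrix.mul_one]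
    congr 1
    · rw [← hRR, Matrix.mul_inv_rev]
    · symm
      calc R⁻¹ * (R * Q⁻¹ * R) * R⁻¹ = (R⁻¹ * R) * (Q⁻¹ * (R * R⁻¹)) := by
            simp only [Matrix.mul_assoc]
        _ = Q⁻¹ := by rw [hRi, hiR, Matrix.one_mul, Matrix.mul_one]
  rw [hfin]
  have h3 := hsub.mul_mul_conjTranspose_same R⁻¹
  rwa [hRiH] at h3

end ResolventAux

theorem resolvent_diff_norm_bound {n : ℕ}
    (A B : Matrix (Fin n) (Fin n) ℝ)
    (hA : A.PosSemidef) (hB : B.PosSemidef) (hAB : (A - B).PosSemidef) :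
    ‖(1 + A)⁻¹ - (1 + B)⁻¹‖ ≤ ‖A - B‖ / (1 + ‖A - B‖) := by
  classical
  set t := ‖A - B‖ with ht
  have ht0 : 0 ≤ t := ht ▸ norm_nonneg _
  have h1t : (0:ℝ) < 1 + t := by linarith
  set c := t / (1 + t) with hc
  have hc0 : 0 ≤ c := div_nonneg ht0 h1t.le
  have hPA : (1 + A).PosDef := Matrix.PosDef.one.add_posSemidef hA
  have hPB : (1 + B).PosDef := Matrix.PosDef.one.add_posSemidef hB
  have hPtB : ((1 + t) • (1 : Matrix (Fin n) (Fin n) ℝ) + B).PosDef :=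
    (ResolventAux.smul_one_posDef h1t).add_posSemidef hB
  have hM0 : ((1 + B)⁻¹ - (1 + A)⁻¹).PosSemidef := by
    apply ResolventAux.inv_sub_inv_posSemidef hPB hPA
    have heq : (1 + A) - (1 + B) = A - B := by abel
    rwa [heq]
  have hND : ((1 + A)⁻¹ - ((1 + t) • 1 + B)⁻¹).PosSemidef := by
    apply ResolventAux.inv_sub_inv_posSemidef hPA hPtB
    have heq : ((1 + t) • (1 : Matrix (Fin n) (Fin n) ℝ) + B) - (1 + A)
        = t • 1 - (A - B) := by
      rw [add_smul, one_smul]; abel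
    rw [heq, ht]
    exact ResolventAux.smul_norm_sub_posSemidef hAB.1
  have hNspec : (c • 1 - ((1 + B)⁻¹
      - ((1 + t) • (1 : Matrix (Fin n) (Fin n) ℝ) + B)⁻¹)).PosSemidef := by
    set V := (hB.1.eigenvectorUnitary : Matrix (Fin n) (Fin n) ℝ) with hV
    have hVu : V * Vᴴ = 1 := by
      rw [← star_eq_conjTranspose]; exact mem_unitaryGroup_iff.mp hB.1.eigenvectorUnitary.2
    have hVu' : Vᴴ * V = 1 := by
      rw [← star_eq_conjTranspose]; exact mem_unitaryGroup_iff'.mp hB.1.eigenvectorUnitary.2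
    have hμ0 : ∀ i, 0 ≤ hB.1.eigenvalues i := fun i => hB.eigenvalues_nonneg i
    have hBr : B = V * diagonal hB.1.eigenvalues * Vᴴ := ResolventAux.spectral_real hB.1
    have h1B : (1 : Matrix (Fin n) (Fin n) ℝ) + B
        = V * diagonal (fun i => 1 + hB.1.eigenvalues i) * Vᴴ := by
      conv_lhs => rw [ResolventAux.one_eq_conj hVu, hBr]
      rw [ResolventAux.conj_add]
    have htB : (1 + t) • (1 : Matrix (Fin n) (Fin n) ℝ) + B
        = V * diagonal (fun i => (1 + t) + hB.1.eigenvalues i) * Vᴴ := by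
      conv_lhs => rw [ResolventAux.conj_smul_one hVu (1 + t), hBr]
      rw [ResolventAux.conj_add]
    have h1Binv : ((1 : Matrix (Fin n) (Fin n) ℝ) + B)⁻¹
        = V * diagonal (fun i => (1 + hB.1.eigenvalues i)⁻¹) * Vᴴ := by
      rw [h1B]
      exact ResolventAux.conj_inv hVu hVu' _ fun i => by nlinarith [hμ0 i]
    have htBinv : ((1 + t) • (1 : Matrix (Fin n) (Fin n) ℝ) + B)⁻¹
        = V * diagonal (fun i => ((1 + t) + hB.1.eigenvalues i)⁻¹) * Vᴴ := by
      rw [htB]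
      exact ResolventAux.conj_inv hVu hVu' _ fun i => by nlinarith [hμ0 i]
    have hfin : c • (1 : Matrix (Fin n) (Fin n) ℝ) - ((1 + B)⁻¹
        - ((1 + t) • (1 : Matrix (Fin n) (Fin n) ℝ) + B)⁻¹)
        = V * diagonal (fun i => c - ((1 + hB.1.eigenvalues i)⁻¹
            - ((1 + t) + hB.1.eigenvalues i)⁻¹)) * Vᴴ := by
      rw [h1Binv, htBinv, ResolventAux.conj_sub]
      conv_lhs => rw [ResolventAux.conj_smul_one hVu c]
      rw [ResolventAux.conj_sub]
    rw [hfin]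
    refine ResolventAux.conj_psd hVu _ fun i => ?_
    have hμi := hμ0 i
    have hp1 : (0:ℝ) < 1 + hB.1.eigenvalues i := by linarith
    have hp2 : (0:ℝ) < (1 + t) + hB.1.eigenvalues i := by linarith
    have hsub : (1 + hB.1.eigenvalues i)⁻¹ - ((1 + t) + hB.1.eigenvalues i)⁻¹
        = t / ((1 + hB.1.eigenvalues i) * ((1 + t) + hB.1.eigenvalues i)) := by
      field_simp
      ring
    rw [hsub, hc]
    have hle : t / ((1 + hB.1.eigenvalues i) * ((1 + t) + hB.1.eigenvalues i)) ≤ t / (1 + t) := by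
      rw [div_le_div_iff₀ (by positivity) h1t]
      nlinarith [mul_nonneg ht0 hμi, mul_nonneg (mul_nonneg ht0 ht0) hμi,
        mul_nonneg ht0 (mul_nonneg hμi hμi)]
    linarith
  have h₁ : (c • 1 - ((1 + B)⁻¹ - (1 + A)⁻¹)).PosSemidef := by
    have heq : c • (1 : Matrix (Fin n) (Fin n) ℝ) - ((1 + B)⁻¹ - (1 + A)⁻¹)
        = (c • 1 - ((1 + B)⁻¹ - ((1 + t) • 1 + B)⁻¹))
          + ((1 + A)⁻¹ - ((1 + t) • 1 + B)⁻¹) := by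
      abel
    rw [heq]
    exact hNspec.add hND
  have h₂ : (c • 1 + ((1 + B)⁻¹ - (1 + A)⁻¹)).PosSemidef :=
    (ResolventAux.smul_one_posSemidef hc0).add hM0
  have hHerm : ((1 + B)⁻¹ - (1 + A)⁻¹).IsHermitian :=
    (hPB.inv.isHermitian).sub (hPA.inv.isHermitian)
  calc ‖(1 + A)⁻¹ - (1 + B)⁻¹‖ = ‖(1 + B)⁻¹ - (1 + A)⁻¹‖ := norm_sub_rev _ _
    _ ≤ c := ResolventAux.norm_le_of_sandwich hHerm hc0 h₁ h₂
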